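/- The weighted nuclear norm with non-increasing weights (w₁ ≥ w₂ ≥ ... ≥ w_n ≥ 0) is a convex function of the matrix; equivalently, ‖X‖_{w,*} = Σᵢ wᵢσᵢ(X) satisfies the triangle inequality ‖X + Y‖_{w,*} ≤ ‖X‖_{w,*} + ‖Y‖_{w,*} and absolute homogeneity when the weight sequence is non-increasing. -/

import Mathlib

open Matrix BigOperators

/-- Singular values of a real matrix (square roots of the eigenvalues of `XᵀX`). -/
noncomputable def sv {m n : ℕ} (X : Matrix (Fin m) (Fin n) ℝ) (i : Fin n) : ℝ :=
  Real.sqrt ((Matrix.isHermitian_conjTranspose_mul_self X).eigenvalues i)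

/-- Singular values sorted in non-increasing order. -/
noncomputable def svSorted {m n : ℕ} (X : Matrix (Fin m) (Fin n) ℝ) (i : Fin n) : ℝ :=
  sv X (Tuple.sort (sv X) i.rev)

/-- Weighted nuclear norm `‖X‖_{w,*} = Σᵢ wᵢ σᵢ(X)` with sorted singular values. -/
noncomputable def wnn {m n : ℕ} (w : Fin n → ℝ) (X : Matrix (Fin m) (Fin n) ℝ) : ℝ :=
  ∑ i, w i * svSorted X i

noncomputable def evec {m n : ℕ} (X : Matrix (Fin m) (Fin n) ℝ) (j : Fin n) : Fin n → ℝ :=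
  ⇑((Matrix.isHermitian_conjTranspose_mul_self X).eigenvectorBasis j)

variable {m n : ℕ} (X : Matrix (Fin m) (Fin n) ℝ)

lemma evec_dot (i j : Fin n) : evec X i ⬝ᵥ evec X j = if i = j then 1 else 0 := by
  have h := (Matrix.isHermitian_conjTranspose_mul_self X).eigenvectorBasis.orthonormal
  rw [orthonormal_iff_ite] at h
  have h2 := h i j
  rw [PiLp.inner_apply] at h2
  simpa [RCLike.inner_apply, dotProduct, evec, mul_comm] using h2

lemma sv_nonneg (j : Fin n) : 0 ≤ sv X j := Real.sqrt_nonneg _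

lemma sv_sq (j : Fin n) : sv X j ^ 2 = (Matrix.isHermitian_conjTranspose_mul_self X).eigenvalues j :=
  Real.sq_sqrt (Matrix.eigenvalues_conjTranspose_mul_self_nonneg X j)

lemma dot_mulVec_mulVec (a b : Fin n → ℝ) :
    (X *ᵥ a) ⬝ᵥ (X *ᵥ b) = a ⬝ᵥ ((Xᵀ * X) *ᵥ b) := by
  rw [← Matrix.mulVec_mulVec, Matrix.dotProduct_mulVec a Xᵀ, Matrix.vecMul_transpose]

lemma B_mulVec_evec (j : Fin n) :
    (Xᵀ * X) *ᵥ evec X j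
      = ((Matrix.isHermitian_conjTranspose_mul_self X).eigenvalues j) • evec X j := by
  have h := (Matrix.isHermitian_conjTranspose_mul_self X).mulVec_eigenvectorBasis j
  simpa [evec] using h

lemma Xv_dot_Xv (i j : Fin n) :
    (X *ᵥ evec X i) ⬝ᵥ (X *ᵥ evec X j) = sv X j ^ 2 * (if i = j then 1 else 0) := by
  rw [dot_mulVec_mulVec, B_mulVec_evec, dotProduct_smul, sv_sq, evec_dot]
  simp [smul_eq_mul]

lemma dot_self_eq_zero' {N : ℕ} {v : Fin N → ℝ} (h : v ⬝ᵥ v = 0) : v = 0 := by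
  funext i
  have hnn : ∀ j ∈ Finset.univ, 0 ≤ v j * v j := fun j _ => mul_self_nonneg _
  have := (Finset.sum_eq_zero_iff_of_nonneg hnn).mp h i (Finset.mem_univ i)
  have := mul_self_eq_zero.mp this
  simpa using this

lemma Xv_eq_zero {j : Fin n} (h : sv X j = 0) : X *ᵥ evec X j = 0 := by
  apply dot_self_eq_zero'
  rw [Xv_dot_Xv]
  simp [h]

lemma evec_expand (a : Fin n → ℝ) : a = ∑ j, (evec X j ⬝ᵥ a) • evec X j := by
  have h := (Matrix.isHermitian_conjTranspose_mul_self X).eigenvectorBasis.sum_repr'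
      ((WithLp.equiv 2 (Fin n → ℝ)).symm a)
  have h2 : ∀ j, (inner ℝ ((Matrix.isHermitian_conjTranspose_mul_self X).eigenvectorBasis j)
      ((WithLp.equiv 2 (Fin n → ℝ)).symm a) : ℝ) = evec X j ⬝ᵥ a := by
    intro j
    rw [PiLp.inner_apply]
    simp only [RCLike.inner_apply, dotProduct, evec, WithLp.equiv]
    exact Finset.sum_congr rfl fun i _ => mul_comm _ _
  rw [show (∑ j, (evec X j ⬝ᵥ a) • evec X j) = ⇑(∑ j, ((inner ℝ ((Matrix.isHermitian_conjTranspose_mul_self X).eigenvectorBasis j) ((WithLp.equiv 2 (Fin n → ℝ)).symm a) : ℝ)) • (Matrix.isHermitian_conjTranspose_mul_self X).eigenvectorBasis j) from ?_]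
  · rw [h]; rfl
  · simp only [h2]; simp [evec]

section helpers
variable {N : ℕ} {ι : Type*}

lemma sum_dot (s : Finset ι) (f : ι → Fin N → ℝ) (z : Fin N → ℝ) :
    (∑ i ∈ s, f i) ⬝ᵥ z = ∑ i ∈ s, f i ⬝ᵥ z := by
  simp only [dotProduct, Finset.sum_apply, Finset.sum_mul]
  rw [Finset.sum_comm]

lemma dot_sum (s : Finset ι) (f : ι → Fin N → ℝ) (z : Fin N → ℝ) :
    z ⬝ᵥ (∑ i ∈ s, f i) = ∑ i ∈ s, z ⬝ᵥ f i := by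
  simp only [dotProduct, Finset.sum_apply, Finset.mul_sum]
  rw [Finset.sum_comm]

lemma dot_self_nonneg (v : Fin N → ℝ) : 0 ≤ v ⬝ᵥ v :=
  Finset.sum_nonneg fun i _ => mul_self_nonneg _

lemma bessel [DecidableEq ι] (s : Finset ι) (u : ι → Fin N → ℝ)
    (hu : ∀ i ∈ s, ∀ j ∈ s, u i ⬝ᵥ u j = if i = j then 1 else 0) (x : Fin N → ℝ) :
    ∑ i ∈ s, (u i ⬝ᵥ x) ^ 2 ≤ x ⬝ᵥ x := by
  set c : ι → ℝ := fun i => u i ⬝ᵥ x with hc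
  set y : Fin N → ℝ := ∑ i ∈ s, c i • u i with hy
  have huy : ∀ i ∈ s, u i ⬝ᵥ y = c i := by
    intro i hi
    rw [hy, dot_sum]
    have : ∀ j ∈ s, u i ⬝ᵥ (c j • u j) = if j = i then c i else 0 := by
      intro j hj
      rw [dotProduct_smul]
      rw [hu i hi j hj]
      by_cases h : i = j <;> simp [h, eq_comm]
    rw [Finset.sum_congr rfl this, Finset.sum_ite_eq' s i (fun _ => c i)]
    simp [hi]
  have hxy : x ⬝ᵥ y = ∑ i ∈ s, c i ^ 2 := by
    rw [hy, dot_sum]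
    refine Finset.sum_congr rfl fun i hi => ?_
    rw [dotProduct_smul, dotProduct_comm, smul_eq_mul, sq]
  have hyy : y ⬝ᵥ y = ∑ i ∈ s, c i ^ 2 := by
    conv_lhs => rw [hy, sum_dot]
    refine Finset.sum_congr rfl fun i hi => ?_
    rw [smul_dotProduct, huy i hi, smul_eq_mul, sq]
  have hpos : 0 ≤ (x - y) ⬝ᵥ (x - y) := dot_self_nonneg _
  rw [sub_dotProduct, dotProduct_sub, dotProduct_sub,
    dotProduct_comm y x] at hpos
  rw [hyy, hxy] at hpos
  linarith

end helpers

noncomputable def pvec {m n : ℕ} (X : Matrix (Fin m) (Fin n) ℝ) (j : Fin n) : Fin m → ℝ :=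
  if sv X j = 0 then 0 else (sv X j)⁻¹ • (X *ᵥ evec X j)

lemma Xv_eq_smul_pvec (j : Fin n) : X *ᵥ evec X j = sv X j • pvec X j := by
  unfold pvec
  by_cases h : sv X j = 0
  · simp [h, Xv_eq_zero X h]
  · rw [if_neg h, smul_smul, mul_inv_cancel₀ h, one_smul]

lemma pvec_dot {i j : Fin n} (hi : sv X i ≠ 0) (hj : sv X j ≠ 0) :
    pvec X i ⬝ᵥ pvec X j = if i = j then 1 else 0 := by
  unfold pvec
  rw [if_neg hi, if_neg hj, smul_dotProduct, dotProduct_smul, Xv_dot_Xv]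
  by_cases h : i = j
  · subst h
    rw [if_pos rfl]
    field_simp
    rw [smul_eq_mul, smul_eq_mul]; field_simp
  · simp [h]

lemma mulVec_expand (a : Fin n → ℝ) :
    X *ᵥ a = ∑ j, (evec X j ⬝ᵥ a) • (X *ᵥ evec X j) := by
  conv_lhs => rw [evec_expand X a]
  rw [show X *ᵥ (∑ j, (evec X j ⬝ᵥ a) • evec X j)
      = X.mulVecLin (∑ j, (evec X j ⬝ᵥ a) • evec X j) from rfl]
  rw [map_sum]
  refine Finset.sum_congr rfl fun j _ => ?_
  rw [_root_.map_smul, Matrix.mulVecLin_apply]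

lemma dot_mulVec_expand (u : Fin m → ℝ) (a : Fin n → ℝ) :
    u ⬝ᵥ (X *ᵥ a) = ∑ j, sv X j * ((evec X j ⬝ᵥ a) * (u ⬝ᵥ pvec X j)) := by
  rw [mulVec_expand, dot_sum]
  refine Finset.sum_congr rfl fun j _ => ?_
  rw [dotProduct_smul, Xv_eq_smul_pvec, dotProduct_smul, smul_eq_mul, smul_eq_mul]
  ring

noncomputable def svPerm {m n : ℕ} (X : Matrix (Fin m) (Fin n) ℝ) : Equiv.Perm (Fin n) :=
  (Fin.revPerm).trans (Tuple.sort (sv X))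

lemma svSorted_eq_perm (i : Fin n) : svSorted X i = sv X (svPerm X i) := rfl

lemma svSorted_antitone : Antitone (svSorted X) := by
  intro i j h
  exact Tuple.monotone_sort (sv X) (Fin.rev_le_rev.mpr h)

lemma svSorted_nonneg (i : Fin n) : 0 ≤ svSorted X i := Real.sqrt_nonneg _

noncomputable def Sk {m n : ℕ} (k : ℕ) (X : Matrix (Fin m) (Fin n) ℝ) : ℝ :=
  ∑ i ∈ Finset.univ.filter (fun i : Fin n => i.val < k), svSorted X i

lemma card_filter_lt_le (n k : ℕ) :
    ((Finset.univ : Finset (Fin n)).filter (fun i => i.val < k)).card ≤ k := by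
  classical
  have : ∀ i ∈ (Finset.univ : Finset (Fin n)).filter (fun i => i.val < k),
      (i : Fin n).val ∈ Finset.range k := by
    intro i hi
    simp only [Finset.mem_filter] at hi
    simpa using hi.2
  calc ((Finset.univ : Finset (Fin n)).filter (fun i => i.val < k)).card
      ≤ (Finset.range k).card := Finset.card_le_card_of_injOn (fun i => i.val) this
        (fun a _ b _ h => Fin.val_injective h)
    _ = k := Finset.card_range k

lemma card_filter_lt_eq {n k : ℕ} (hk : k ≤ n) :
    ((Finset.univ : Finset (Fin n)).filter (fun i => i.val < k)).card = k := by
  classical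
  have hlt : ∀ a ∈ Finset.range k, a < n := fun a ha =>
    lt_of_lt_of_le (Finset.mem_range.mp ha) hk
  have : ((Finset.univ : Finset (Fin n)).filter (fun i => i.val < k))
      = (Finset.range k).attachFin hlt := by
    ext a
    simp [Finset.mem_attachFin]
  rw [this, Finset.card_attachFin, Finset.card_range]

lemma rearrange {n : ℕ} (g e : Fin n → ℝ) (hg : Antitone g) (hg0 : ∀ i, 0 ≤ g i)
    (he0 : ∀ i, 0 ≤ e i) (he1 : ∀ i, e i ≤ 1) (k : ℕ) (hek : ∑ i, e i ≤ k) :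
    ∑ i, g i * e i ≤ ∑ i ∈ Finset.univ.filter (fun i : Fin n => i.val < k), g i := by
  classical
  by_cases hk : n ≤ k
  · have hfil : (Finset.univ : Finset (Fin n)).filter (fun i => i.val < k) = Finset.univ := by
      apply Finset.filter_true_of_mem
      intro i _
      exact lt_of_lt_of_le i.isLt hk
    rw [hfil]
    apply Finset.sum_le_sum
    intro i _
    calc g i * e i ≤ g i * 1 := mul_le_mul_of_nonneg_left (he1 i) (hg0 i)
      _ = g i := mul_one _
  · push_neg at hk
    set K : Fin n := ⟨k, hk⟩ with hK
    set c : ℝ := g K with hc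
    have hc0 : 0 ≤ c := hg0 K
    have hsplit := Finset.sum_filter_add_sum_filter_not Finset.univ
      (fun i : Fin n => i.val < k) (fun i => g i * e i)
    have hesplit := Finset.sum_filter_add_sum_filter_not Finset.univ
      (fun i : Fin n => i.val < k) (fun i => e i)
    set s₁ := (Finset.univ : Finset (Fin n)).filter (fun i => i.val < k) with hs₁
    set s₂ := (Finset.univ : Finset (Fin n)).filter (fun i => ¬ i.val < k) with hs₂
    have hcard : s₁.card = k := card_filter_lt_eq hk.le
    have b1 : ∑ i ∈ s₁, g i * e i ≤ ∑ i ∈ s₁, (g i + c * (e i - 1)) := by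
      apply Finset.sum_le_sum
      intro i hi
      have hik : i ≤ K := by
        simp only [hs₁, Finset.mem_filter] at hi
        exact le_of_lt (by exact_mod_cast hi.2)
      have hgi : c ≤ g i := hg hik
      nlinarith [he1 i, he0 i]
    have b2 : ∑ i ∈ s₂, g i * e i ≤ ∑ i ∈ s₂, c * e i := by
      apply Finset.sum_le_sum
      intro i hi
      have hik : K ≤ i := by
        simp only [hs₂, Finset.mem_filter, not_lt] at hi
        exact hi.2
      have hgi : g i ≤ c := hg hik
      exact mul_le_mul_of_nonneg_right hgi (he0 i)
    have e1 : ∑ i ∈ s₁, (g i + c * (e i - 1))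
        = ∑ i ∈ s₁, g i + c * (∑ i ∈ s₁, e i - k) := by
      rw [Finset.sum_add_distrib, ← Finset.mul_sum, Finset.sum_sub_distrib,
        Finset.sum_const, hcard]
      simp
    have e2 : ∑ i ∈ s₂, c * e i = c * ∑ i ∈ s₂, e i := (Finset.mul_sum _ _ _).symm
    have hfin : c * (∑ i ∈ s₁, e i - k) + c * ∑ i ∈ s₂, e i ≤ 0 := by
      have h1 : ∑ i ∈ s₁, e i + ∑ i ∈ s₂, e i ≤ k := by rw [hesplit]; exact hek
      nlinarith
    linarith [hsplit, b1, b2, e1, e2, hfin]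

lemma kyfan_bound (k : ℕ) (s : Finset (Fin n)) (hcard : s.card ≤ k)
    (u : Fin n → Fin m → ℝ) (r : Fin n → Fin n → ℝ)
    (hu : ∀ i ∈ s, ∀ j ∈ s, u i ⬝ᵥ u j = if i = j then 1 else 0)
    (hr : ∀ i ∈ s, ∀ j ∈ s, r i ⬝ᵥ r j = if i = j then 1 else 0) :
    ∑ i ∈ s, u i ⬝ᵥ (X *ᵥ r i) ≤ Sk k X := by
  classical
  set a : Fin n → Fin n → ℝ := fun i j => evec X j ⬝ᵥ r i with ha
  set b : Fin n → Fin n → ℝ := fun i j => u i ⬝ᵥ pvec X j with hb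
  set c : Fin n → ℝ := fun j => ∑ i ∈ s, a i j * b i j with hc
  set d : Fin n → ℝ := fun j => |c j| with hd
  -- rewrite LHS
  have hLHS : ∑ i ∈ s, u i ⬝ᵥ (X *ᵥ r i) = ∑ j, sv X j * c j := by
    rw [Finset.sum_congr rfl (fun i (_ : i ∈ s) => dot_mulVec_expand X (u i) (r i)),
      Finset.sum_comm]
    refine Finset.sum_congr rfl fun j _ => ?_
    rw [hc, Finset.mul_sum]
  -- Bessel bounds
  have hbesr : ∀ j, ∑ i ∈ s, a i j ^ 2 ≤ 1 := by
    intro j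
    have h1 : ∑ i ∈ s, (r i ⬝ᵥ evec X j) ^ 2 ≤ evec X j ⬝ᵥ evec X j := bessel s r hr _
    rw [evec_dot X j j, if_pos rfl] at h1
    calc ∑ i ∈ s, a i j ^ 2 = ∑ i ∈ s, (r i ⬝ᵥ evec X j) ^ 2 :=
          Finset.sum_congr rfl fun i _ => by rw [ha, dotProduct_comm]
      _ ≤ 1 := h1
  have hpvec_self : ∀ j, pvec X j ⬝ᵥ pvec X j ≤ 1 := by
    intro j
    by_cases h : sv X j = 0
    · simp [pvec, h]
    · rw [pvec_dot X h h, if_pos rfl]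
  have hbesu : ∀ j, ∑ i ∈ s, b i j ^ 2 ≤ 1 := by
    intro j
    exact le_trans (bessel s u hu (pvec X j)) (hpvec_self j)
  -- d j ≤ 1
  have hd1 : ∀ j, d j ≤ 1 := by
    intro j
    rw [hd, abs_le_one_iff_mul_self_le_one, ← sq]
    calc c j ^ 2 ≤ (∑ i ∈ s, a i j ^ 2) * ∑ i ∈ s, b i j ^ 2 :=
          Finset.sum_mul_sq_le_sq_mul_sq s _ _
      _ ≤ 1 * 1 := by
          apply mul_le_mul (hbesr j) (hbesu j)
            (Finset.sum_nonneg fun i _ => sq_nonneg _) zero_le_one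
      _ = 1 := one_mul 1
  have hd0 : ∀ j, 0 ≤ d j := fun j => abs_nonneg _
  -- sum d ≤ k
  have hTsub : ∀ i ∈ s, ∑ j, b i j ^ 2 ≤ 1 := by
    intro i hi
    set T := (Finset.univ : Finset (Fin n)).filter (fun j => sv X j ≠ 0) with hT
    have hzero : ∀ j ∈ Finset.univ, j ∉ T → b i j ^ 2 = 0 := by
      intro j _ hj
      simp only [hT, Finset.mem_filter, Finset.mem_univ, true_and, not_not] at hj
      simp [hb, pvec, hj]
    rw [← Finset.sum_subset (Finset.subset_univ T) hzero]
    have hortho : ∀ p ∈ T, ∀ q ∈ T, pvec X p ⬝ᵥ pvec X q = if p = q then 1 else 0 := by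
      intro p hp q hq
      simp only [hT, Finset.mem_filter] at hp hq
      exact pvec_dot X hp.2 hq.2
    have h1 : ∑ j ∈ T, (pvec X j ⬝ᵥ u i) ^ 2 ≤ u i ⬝ᵥ u i := bessel T (pvec X) hortho _
    rw [hu i hi i hi, if_pos rfl] at h1
    calc ∑ j ∈ T, b i j ^ 2 = ∑ j ∈ T, (pvec X j ⬝ᵥ u i) ^ 2 :=
          Finset.sum_congr rfl fun j _ => by rw [hb, dotProduct_comm]
      _ ≤ 1 := h1
  have hrsub : ∀ i ∈ s, ∑ j, a i j ^ 2 ≤ 1 := by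
    intro i hi
    have h1 : ∑ j, (evec X j ⬝ᵥ r i) ^ 2 ≤ r i ⬝ᵥ r i :=
      bessel Finset.univ (evec X) (fun p _ q _ => evec_dot X p q) _
    rw [hr i hi i hi, if_pos rfl] at h1
    exact h1
  have hsum_d : ∑ j, d j ≤ (k : ℝ) := by
    have hstep : ∀ i ∈ s, ∑ j, |a i j| * |b i j| ≤ 1 := by
      intro i hi
      have hnn : (0:ℝ) ≤ ∑ j, |a i j| * |b i j| :=
        Finset.sum_nonneg fun j _ => mul_nonneg (abs_nonneg _) (abs_nonneg _)
      have hsq : (∑ j, |a i j| * |b i j|) ^ 2 ≤ 1 := by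
        calc (∑ j, |a i j| * |b i j|) ^ 2
            ≤ (∑ j, |a i j| ^ 2) * ∑ j, |b i j| ^ 2 :=
              Finset.sum_mul_sq_le_sq_mul_sq _ _ _
          _ = (∑ j, a i j ^ 2) * ∑ j, b i j ^ 2 := by simp [sq_abs]
          _ ≤ 1 * 1 := mul_le_mul (hrsub i hi) (hTsub i hi)
              (Finset.sum_nonneg fun j _ => sq_nonneg _) zero_le_one
          _ = 1 := one_mul 1
      nlinarith
    calc ∑ j, d j ≤ ∑ j, ∑ i ∈ s, |a i j| * |b i j| := by
          apply Finset.sum_le_sum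
          intro j _
          calc d j = |∑ i ∈ s, a i j * b i j| := rfl
            _ ≤ ∑ i ∈ s, |a i j * b i j| := Finset.abs_sum_le_sum_abs _ _
            _ = ∑ i ∈ s, |a i j| * |b i j| :=
              Finset.sum_congr rfl fun i _ => abs_mul _ _
      _ = ∑ i ∈ s, ∑ j, |a i j| * |b i j| := Finset.sum_comm
      _ ≤ ∑ i ∈ s, 1 := Finset.sum_le_sum hstep
      _ = (s.card : ℝ) := by simp
      _ ≤ (k : ℝ) := by exact_mod_cast hcard
  -- combine
  rw [hLHS]
  have h1 : ∑ j, sv X j * c j ≤ ∑ j, sv X j * d j := by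
    apply Finset.sum_le_sum
    intro j _
    exact mul_le_mul_of_nonneg_left (le_abs_self _) (sv_nonneg X j)
  have h2 : ∑ j, sv X j * d j = ∑ i, svSorted X i * d (svPerm X i) :=
    (Equiv.sum_comp (svPerm X) (fun j => sv X j * d j)).symm
  have h3 : ∑ i, d (svPerm X i) ≤ (k : ℝ) := by
    rw [Equiv.sum_comp (svPerm X) d]
    exact hsum_d
  have h4 := rearrange (svSorted X) (fun i => d (svPerm X i)) (svSorted_antitone X)
    (svSorted_nonneg X) (fun i => hd0 _) (fun i => hd1 _) k h3
  calc ∑ j, sv X j * c j ≤ ∑ j, sv X j * d j := h1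
    _ = ∑ i, svSorted X i * d (svPerm X i) := h2
    _ ≤ Sk k X := h4

lemma kyfan_attain (k : ℕ) :
    ∃ (s : Finset (Fin n)) (u : Fin n → Fin m → ℝ) (v : Fin n → Fin n → ℝ),
      s.card ≤ k ∧
      (∀ i ∈ s, ∀ j ∈ s, u i ⬝ᵥ u j = if i = j then 1 else 0) ∧
      (∀ i ∈ s, ∀ j ∈ s, v i ⬝ᵥ v j = if i = j then 1 else 0) ∧
      Sk k X = ∑ i ∈ s, u i ⬝ᵥ (X *ᵥ v i) := by
  classical
  set π := svPerm X with hπ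
  set s : Finset (Fin n) :=
    Finset.univ.filter (fun i : Fin n => i.val < k ∧ sv X (π i) ≠ 0) with hs
  refine ⟨s, fun i => pvec X (π i), fun i => evec X (π i), ?_, ?_, ?_, ?_⟩
  · calc s.card ≤ ((Finset.univ : Finset (Fin n)).filter (fun i => i.val < k)).card := by
          apply Finset.card_le_card
          intro i hi
          simp only [hs, Finset.mem_filter] at hi ⊢
          exact ⟨hi.1, hi.2.1⟩
      _ ≤ k := card_filter_lt_le n k
  · intro i hi j hj
    simp only [hs, Finset.mem_filter] at hi hj
    rw [pvec_dot X hi.2.2 hj.2.2]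
    simp [Equiv.apply_eq_iff_eq]
  · intro i hi j hj
    rw [evec_dot]
    simp [Equiv.apply_eq_iff_eq]
  · have hsub : s ⊆ (Finset.univ : Finset (Fin n)).filter (fun i => i.val < k) := by
      intro i hi
      simp only [hs, Finset.mem_filter] at hi ⊢
      exact ⟨hi.1, hi.2.1⟩
    have hzero : ∀ i ∈ (Finset.univ : Finset (Fin n)).filter (fun i => i.val < k),
        i ∉ s → svSorted X i = 0 := by
      intro i hik his
      simp only [hs, Finset.mem_filter, Finset.mem_univ, true_and, not_and] at hik his
      have : sv X (π i) = 0 := by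
        by_contra h
        exact (his (by simpa using hik)) h
      rw [svSorted_eq_perm, ← hπ, this]
    have hterm : ∀ i ∈ s, pvec X (π i) ⬝ᵥ (X *ᵥ evec X (π i)) = svSorted X i := by
      intro i hi
      simp only [hs, Finset.mem_filter] at hi
      rw [Xv_eq_smul_pvec, dotProduct_smul, pvec_dot X hi.2.2 hi.2.2, if_pos rfl,
        smul_eq_mul, mul_one, svSorted_eq_perm, ← hπ]
    rw [Finset.sum_congr rfl hterm]
    exact (Finset.sum_subset hsub hzero).symm

lemma Sk_nonneg (k : ℕ) : 0 ≤ Sk k X :=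
  Finset.sum_nonneg fun i _ => svSorted_nonneg X i

lemma Sk_add_le (Y : Matrix (Fin m) (Fin n) ℝ) (k : ℕ) :
    Sk k (X + Y) ≤ Sk k X + Sk k Y := by
  obtain ⟨s, u, v, hcard, hu, hv, heq⟩ := kyfan_attain (X + Y) k
  rw [heq]
  have hterm : ∀ i ∈ s, u i ⬝ᵥ ((X + Y) *ᵥ v i)
      = u i ⬝ᵥ (X *ᵥ v i) + u i ⬝ᵥ (Y *ᵥ v i) := by
    intro i _
    rw [Matrix.add_mulVec, dotProduct_add]
  rw [Finset.sum_congr rfl hterm, Finset.sum_add_distrib]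
  exact add_le_add (kyfan_bound X k s hcard u v hu hv) (kyfan_bound Y k s hcard u v hu hv)

lemma Sk_smul_le (c : ℝ) (k : ℕ) : Sk k (c • X) ≤ |c| * Sk k X := by
  obtain ⟨s, u, v, hcard, hu, hv, heq⟩ := kyfan_attain (c • X) k
  have hterm : ∀ i ∈ s, u i ⬝ᵥ ((c • X) *ᵥ v i) = c * (u i ⬝ᵥ (X *ᵥ v i)) := by
    intro i _
    rw [Matrix.smul_mulVec, dotProduct_smul, smul_eq_mul]
  rw [heq, Finset.sum_congr rfl hterm, ← Finset.mul_sum]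
  set t := ∑ i ∈ s, u i ⬝ᵥ (X *ᵥ v i) with ht
  have h1 : t ≤ Sk k X := kyfan_bound X k s hcard u v hu hv
  have h2 : -t ≤ Sk k X := by
    have hneg : ∀ i ∈ s, ∀ j ∈ s, (-u i) ⬝ᵥ (-u j) = if i = j then 1 else 0 := by
      intro i hi j hj
      rw [neg_dotProduct_neg]
      exact hu i hi j hj
    have := kyfan_bound X k s hcard (fun i => -(u i)) v hneg hv
    calc -t = ∑ i ∈ s, (-(u i)) ⬝ᵥ (X *ᵥ v i) := by
          rw [ht, ← Finset.sum_neg_distrib]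
          exact Finset.sum_congr rfl fun i _ => (neg_dotProduct _ _).symm
      _ ≤ Sk k X := this
  calc c * t ≤ |c * t| := le_abs_self _
    _ = |c| * |t| := abs_mul c t
    _ ≤ |c| * Sk k X := mul_le_mul_of_nonneg_left (abs_le.mpr ⟨by linarith, h1⟩) (abs_nonneg c)

lemma Sk_smul (c : ℝ) (k : ℕ) : Sk k (c • X) = |c| * Sk k X := by
  rcases eq_or_ne c 0 with hc | hc
  · subst hc
    rw [zero_smul, abs_zero, zero_mul]
    refine le_antisymm ?_ (Sk_nonneg 0 k)
    have := Sk_smul_le X 0 k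
    rw [zero_smul, abs_zero, zero_mul] at this
    exact this
  · refine le_antisymm (Sk_smul_le X c k) ?_
    have h := Sk_smul_le (c • X) c⁻¹ k
    rw [smul_smul, inv_mul_cancel₀ hc, one_smul, abs_inv] at h
    have hcpos : 0 < |c| := abs_pos.mpr hc
    calc |c| * Sk k X ≤ |c| * (|c|⁻¹ * Sk k (c • X)) :=
          mul_le_mul_of_nonneg_left h hcpos.le
      _ = Sk k (c • X) := by field_simp

lemma Sk_succ (i : Fin n) : Sk (i.val + 1) X = Sk i.val X + svSorted X i := by
  unfold Sk
  have hins : (Finset.univ : Finset (Fin n)).filter (fun j => j.val < i.val + 1)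
      = insert i ((Finset.univ : Finset (Fin n)).filter (fun j => j.val < i.val)) := by
    ext j
    simp only [Finset.mem_filter, Finset.mem_univ, true_and, Finset.mem_insert,
      Nat.lt_succ_iff_lt_or_eq]
    constructor
    · rintro (h | h)
      · exact Or.inr h
      · exact Or.inl (Fin.ext h)
    · rintro (h | h)
      · exact Or.inr (h ▸ rfl)
      · exact Or.inl h
  rw [hins, Finset.sum_insert (by simp)]
  ring

lemma svSorted_smul (c : ℝ) (i : Fin n) : svSorted (c • X) i = |c| * svSorted X i := by
  have h1 := Sk_succ (c • X) i
  have h2 := Sk_succ X i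
  have h3 := Sk_smul X c (i.val + 1)
  have h4 := Sk_smul X c i.val
  have h5 : |c| * Sk (i.val + 1) X = |c| * Sk i.val X + |c| * svSorted X i := by
    rw [h2]; ring
  linarith

lemma abel_nonpos : ∀ (N : ℕ) (w D : ℕ → ℝ), (∀ a b : ℕ, a ≤ b → w b ≤ w a) → 0 ≤ w N →
    (∀ k, k ≤ N → ∑ i ∈ Finset.range k, D i ≤ 0) →
    ∑ i ∈ Finset.range N, w i * D i ≤ 0 := by
  intro N
  induction N with
  | zero => intro w D _ _ _; simp
  | succ N ih =>
    intro w D hmono hnn hP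
    have hkey : ∑ i ∈ Finset.range (N + 1), w i * D i
        = ∑ i ∈ Finset.range N, (w i - w N) * D i
          + w N * ∑ i ∈ Finset.range (N + 1), D i := by
      calc ∑ i ∈ Finset.range (N + 1), w i * D i
          = ∑ i ∈ Finset.range (N + 1), ((w i - w N) * D i + w N * D i) :=
            Finset.sum_congr rfl fun i _ => by ring
        _ = ∑ i ∈ Finset.range (N + 1), (w i - w N) * D i
            + ∑ i ∈ Finset.range (N + 1), w N * D i := Finset.sum_add_distrib
        _ = ∑ i ∈ Finset.range N, (w i - w N) * D i
            + w N * ∑ i ∈ Finset.range (N + 1), D i := by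
            rw [Finset.sum_range_succ (f := fun i => (w i - w N) * D i), ← Finset.mul_sum]
            simp
    have h1 : ∑ i ∈ Finset.range N, (w i - w N) * D i ≤ 0 := by
      apply ih (fun i => w i - w N) D
      · intro a b hab
        have := hmono a b hab
        simp only [sub_le_sub_iff_right]
        exact this
      · simp
      · exact fun k hk => hP k (hk.trans (Nat.le_succ N))
    have hw : 0 ≤ w N := le_trans hnn (hmono N (N + 1) (Nat.le_succ N))
    have h2 : w N * ∑ i ∈ Finset.range (N + 1), D i ≤ 0 :=
      mul_nonpos_of_nonneg_of_nonpos hw (hP (N + 1) le_rfl)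
    linarith

lemma sum_filter_eq_range {n : ℕ} (f : Fin n → ℝ) (k : ℕ) (hk : k ≤ n) :
    ∑ i ∈ Finset.univ.filter (fun i : Fin n => i.val < k), f i
      = ∑ i ∈ Finset.range k, (if h : i < n then f ⟨i, h⟩ else 0) := by
  classical
  refine Finset.sum_bij'
    (fun (i : Fin n) (_ : i ∈ Finset.univ.filter (fun i : Fin n => i.val < k)) => i.val)
    (fun a (ha : a ∈ Finset.range k) =>
      (⟨a, lt_of_lt_of_le (Finset.mem_range.mp ha) hk⟩ : Fin n))
    (fun a ha => ?_) (fun a ha => ?_) (fun a ha => rfl) (fun a ha => rfl) (fun a ha => ?_)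
  · simp only [Finset.mem_filter, Finset.mem_univ, true_and] at ha
    simpa using ha
  · simp only [Finset.mem_filter, Finset.mem_univ, true_and]
    exact Finset.mem_range.mp ha
  · rw [dif_pos a.isLt]

theorem stmt8' {m n : ℕ} (w : Fin n → ℝ) (hwnn : ∀ i, 0 ≤ w i)
    (hwmono : ∀ i j : Fin n, i ≤ j → w j ≤ w i) :
    (∀ X Y : Matrix (Fin m) (Fin n) ℝ,
        (∑ i, w i * svSorted (X + Y) i) ≤ (∑ i, w i * svSorted X i) + ∑ i, w i * svSorted Y i) ∧
    (∀ (c : ℝ) (X : Matrix (Fin m) (Fin n) ℝ),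
        (∑ i, w i * svSorted (c • X) i) = |c| * ∑ i, w i * svSorted X i) := by
  constructor
  · intro X Y
    classical
    set D : ℕ → ℝ := fun i =>
      if h : i < n then svSorted (X + Y) ⟨i, h⟩ - svSorted X ⟨i, h⟩ - svSorted Y ⟨i, h⟩ else 0
      with hD
    set w' : ℕ → ℝ := fun i => if h : i < n then w ⟨i, h⟩ else 0 with hw'
    have hmono' : ∀ a b : ℕ, a ≤ b → w' b ≤ w' a := by
      intro a b hab
      rw [hw']
      dsimp only
      by_cases hb : b < n
      · have ha : a < n := lt_of_le_of_lt hab hb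
        rw [dif_pos hb, dif_pos ha]
        exact hwmono ⟨a, ha⟩ ⟨b, hb⟩ hab
      · rw [dif_neg hb]
        by_cases ha : a < n
        · rw [dif_pos ha]; exact hwnn _
        · rw [dif_neg ha]
    have hP : ∀ k, k ≤ n → ∑ i ∈ Finset.range k, D i ≤ 0 := by
      intro k hk
      have hDsum : ∑ i ∈ Finset.range k, D i = Sk k (X + Y) - Sk k X - Sk k Y := by
        unfold Sk
        rw [sum_filter_eq_range _ k hk, sum_filter_eq_range _ k hk, sum_filter_eq_range _ k hk,
          ← Finset.sum_sub_distrib, ← Finset.sum_sub_distrib]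
        apply Finset.sum_congr rfl
        intro i hi
        have h : i < n := lt_of_lt_of_le (Finset.mem_range.mp hi) hk
        rw [hD]
        simp only [dif_pos h]
      rw [hDsum]
      have := Sk_add_le X Y k
      linarith
    have habel := abel_nonpos n w' D hmono' (by rw [hw']; simp) hP
    have hconv : ∑ i ∈ Finset.range n, w' i * D i
        = (∑ i, w i * svSorted (X + Y) i) - (∑ i, w i * svSorted X i)
          - ∑ i, w i * svSorted Y i := by
      rw [← Fin.sum_univ_eq_sum_range (fun i => w' i * D i) n,
        ← Finset.sum_sub_distrib, ← Finset.sum_sub_distrib]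
      apply Finset.sum_congr rfl
      intro i _
      have hi : (i : ℕ) < n := i.isLt
      rw [hw', hD]
      simp only [dif_pos hi, Fin.eta]
      ring
    linarith
  · intro c X
    rw [Finset.mul_sum]
    exact Finset.sum_congr rfl fun i _ => by rw [svSorted_smul]; ring

/-- With non-increasing nonnegative weights, the weighted nuclear norm satisfies the
triangle inequality and absolute homogeneity. -/
theorem stmt8 {m n : ℕ} (w : Fin n → ℝ) (hwnn : ∀ i, 0 ≤ w i)
    (hwmono : ∀ i j : Fin n, i ≤ j → w j ≤ w i) :
    (∀ X Y : Matrix (Fin m) (Fin n) ℝ, wnn w (X + Y) ≤ wnn w X + wnn w Y) ∧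
    (∀ (c : ℝ) (X : Matrix (Fin m) (Fin n) ℝ), wnn w (c • X) = |c| * wnn w X) := by
  simp only [wnn]
  exact stmt8' w hwnn hwmono
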